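/- Let p, q : ℕ → ℕ with p(n) < q(n) and q(n) → ∞. The space [σ₀]_p^q = { x ∈ ℂ^ℕ : lim_n (1/(q(n)-p(n))) Σ_{k=p(n)+1}^{q(n)} x_k = 0 } is a normed space under ‖x‖ = sup_n |(1/(q(n)-p(n))) Σ_{k=p(n)+1}^{q(n)} x_k|, and this supremum is finite for every x in the space. -/

import Mathlib

open Filter Topology

/-- `[σ₀]_p^q` is a normed (sequence) space under the sup of absolute values of the
deferred Cesàro means, and this supremum is finite for every member. -/
theorem sigma0_pq_normed_space (p q : ℕ → ℕ) (hpq : ∀ n, p n < q n)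
    (hq : Tendsto q atTop atTop) :
    let dm : (ℕ → ℂ) → ℕ → ℂ :=
      fun x n => ((q n : ℂ) - (p n : ℂ))⁻¹ * ∑ k ∈ Finset.Icc (p n + 1) (q n), x k
    let S : Set (ℕ → ℂ) := {x | Tendsto (dm x) atTop (nhds 0)}
    let N : (ℕ → ℂ) → ℝ := fun x => ⨆ n, ‖dm x n‖
    -- `S` is a linear subspace
    ((0 : ℕ → ℂ) ∈ S) ∧
    (∀ x ∈ S, ∀ y ∈ S, x + y ∈ S) ∧
    (∀ (a : ℂ), ∀ x ∈ S, a • x ∈ S) ∧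
    -- the norm is finite-valued on `S`
    (∀ x ∈ S, BddAbove (Set.range fun n => ‖dm x n‖)) ∧
    -- norm axioms
    (N 0 = 0) ∧
    (∀ x ∈ S, 0 ≤ N x) ∧
    (∀ x ∈ S, ∀ y ∈ S, N (x + y) ≤ N x + N y) ∧
    (∀ (a : ℂ), ∀ x ∈ S, N (a • x) = ‖a‖ * N x) := by
  intro dm S N
  have dm0 : dm 0 = fun _ => 0 := by
    funext n; simp [dm]
  have dm_add : ∀ x y, dm (x + y) = fun n => dm x n + dm y n := by
    intro x y; funext n
    simp only [dm, Pi.add_apply, Finset.sum_add_distrib, mul_add]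
  have dm_smul : ∀ (a : ℂ) x, dm (a • x) = fun n => a * dm x n := by
    intro a x; funext n
    simp only [dm, Pi.smul_apply, smul_eq_mul, ← Finset.mul_sum]
    ring
  have hbdd : ∀ x ∈ S, BddAbove (Set.range fun n => ‖dm x n‖) := by
    intro x hx
    have : Tendsto (fun n => ‖dm x n‖) atTop (nhds 0) := by
      simpa [Function.comp_def] using (continuous_norm.tendsto 0).comp hx
    exact this.bddAbove_range
  refine ⟨?_, ?_, ?_, hbdd, ?_, ?_, ?_, ?_⟩
  · show Tendsto (dm 0) atTop (nhds 0)
    rw [dm0]; exact tendsto_const_nhds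
  · intro x hx y hy
    show Tendsto (dm (x + y)) atTop (nhds 0)
    rw [dm_add]
    simpa using hx.add hy
  · intro a x hx
    show Tendsto (dm (a • x)) atTop (nhds 0)
    rw [dm_smul]
    simpa using hx.const_mul a
  · simp [N, dm0]
  · intro x hx
    exact Real.iSup_nonneg fun n => norm_nonneg _
  · intro x hx y hy
    refine ciSup_le fun n => ?_
    rw [dm_add]
    calc ‖dm x n + dm y n‖ ≤ ‖dm x n‖ + ‖dm y n‖ :=
          norm_add_le _ _
      _ ≤ N x + N y := add_le_add (le_ciSup (hbdd x hx) n) (le_ciSup (hbdd y hy) n)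
  · intro a x hx
    simp only [N, dm_smul, norm_mul]
    exact (Real.mul_iSup_of_nonneg (norm_nonneg _) _).symm
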